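/- Let d, m be positive integers with d dividing m, d < m, and gcd(2^d − 1, m/d) = 1. Then the number of y ∈ F_{2^m}, y ≠ 0, such that Tr_{2^m/2^d}(y^{2^d−1}) = 0 equals 2^{m−d} − 1. -/

import Mathlib

open scoped Classical BigOperators

noncomputable section

/-- The finite field `F_{2^m}`. -/
abbrev Fq (m : ℕ) := GaloisField 2 m

noncomputable instance (m : ℕ) : Fintype (Fq m) := Fintype.ofFinite _

/-- The relative trace `Tr_{2^m/2^d} : F_{2^m} → F_{2^d}`,
`x ↦ Σ_{j<m/d} x^(2^(dj))`, viewed inside `F_{2^m}`. -/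
def trRel (m d : ℕ) (x : Fq m) : Fq m := ∑ j ∈ Finset.range (m / d), x ^ 2 ^ (d * j)

/- ------------------ auxiliary lemmas ------------------ -/

lemma fqCard (m : ℕ) (hm : m ≠ 0) : Fintype.card (Fq m) = 2 ^ m := by
  rw [← Nat.card_eq_fintype_card, GaloisField.card 2 m hm]

lemma fix_pow_mul {m d : ℕ} {c : Fq m} (hc : c ^ 2 ^ d = c) (j : ℕ) :
    c ^ 2 ^ (d * j) = c := by
  induction j with
  | zero => simp
  | succ j ih => rw [Nat.mul_succ, pow_add, pow_mul, ih, hc]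

lemma trRel_mul_left {m d : ℕ} {c : Fq m} (hc : c ^ 2 ^ d = c) (x : Fq m) :
    trRel m d (c * x) = c * trRel m d x := by
  unfold trRel
  rw [Finset.mul_sum]
  refine Finset.sum_congr rfl fun j _ => ?_
  rw [mul_pow, fix_pow_mul hc]

lemma trRel_add (m d : ℕ) (x y : Fq m) :
    trRel m d (x + y) = trRel m d x + trRel m d y := by
  unfold trRel
  rw [← Finset.sum_add_distrib]
  exact Finset.sum_congr rfl fun j _ => add_pow_char_pow (p := 2) (n := d * j) x y

lemma trRel_zero (m d : ℕ) : trRel m d 0 = 0 := by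
  unfold trRel
  refine Finset.sum_eq_zero fun j _ => ?_
  exact zero_pow (pow_ne_zero _ two_ne_zero)

lemma trRel_pow_q {m d : ℕ} (hd : 0 < d) (hdvd : d ∣ m) (hm : m ≠ 0) (x : Fq m) :
    (trRel m d x) ^ 2 ^ d = trRel m d x := by
  set n := m / d with hn
  have hdn : d * n = m := Nat.mul_div_cancel' hdvd
  set f : ℕ → Fq m := fun j => x ^ 2 ^ (d * j) with hf
  have hfn : f n = f 0 := by
    simp only [hf, Nat.mul_zero, pow_zero, pow_one, hdn]
    rw [← fqCard m hm]
    exact FiniteField.pow_card x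
  have step : (trRel m d x) ^ 2 ^ d = ∑ j ∈ Finset.range n, f (j + 1) := by
    unfold trRel
    rw [sum_pow_char_pow (p := 2) (n := d)]
    refine Finset.sum_congr rfl fun j _ => ?_
    show (x ^ 2 ^ (d * j)) ^ 2 ^ d = x ^ 2 ^ (d * (j + 1))
    rw [← pow_mul, ← pow_add, Nat.mul_succ]
  rw [step]
  have h1 := Finset.sum_range_succ' f n
  have h2 := Finset.sum_range_succ f n
  have : (∑ j ∈ Finset.range n, f (j + 1)) + f 0 = (∑ j ∈ Finset.range n, f j) + f 0 := by
    rw [← h1, h2, hfn]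
  have := add_right_cancel this
  rw [this]
  rfl

lemma card_eval_zero_le {K : Type*} [Field K] [Fintype K] [DecidableEq K]
    (p : Polynomial K) (hp : p ≠ 0) :
    (Finset.univ.filter fun x => Polynomial.eval x p = 0).card ≤ p.natDegree := by
  have hsub : (Finset.univ.filter fun x => Polynomial.eval x p = 0) ⊆ p.roots.toFinset := by
    intro x hx
    rw [Finset.mem_filter] at hx
    rw [Multiset.mem_toFinset, Polynomial.mem_roots hp]
    exact hx.2
  calc (Finset.univ.filter fun x => Polynomial.eval x p = 0).card
      ≤ p.roots.toFinset.card := Finset.card_le_card hsub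
    _ ≤ Multiset.card p.roots := Multiset.toFinset_card_le _
    _ ≤ p.natDegree := p.card_roots'

/-- The kernel of the relative trace has size `2^(m-d)`. -/
lemma trRel_ker_card (d m : ℕ) (hd : 0 < d) (hdvd : d ∣ m) (hlt : d < m) :
    (Finset.univ.filter fun x : Fq m => trRel m d x = 0).card = 2 ^ (m - d) := by
  have hm : m ≠ 0 := by omega
  set n := m / d with hn
  have hdn : d * n = m := Nat.mul_div_cancel' hdvd
  have hn2 : 2 ≤ n := by
    by_contra h
    interval_cases n <;> omega
  set φ : Fq m →+ Fq m := AddMonoidHom.mk' (trRel m d) (trRel_add m d) with hφ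
  have hker : Nat.card φ.ker = (Finset.univ.filter fun x : Fq m => trRel m d x = 0).card := by
    rw [Nat.card_eq_fintype_card, Fintype.card_subtype]
    congr 1
    ext x
    simp [hφ, AddMonoidHom.mem_ker]
  -- kernel bound via the polynomial ∑ X^(2^(dj))
  set P : Polynomial (Fq m) := ∑ j ∈ Finset.range n, Polynomial.X ^ 2 ^ (d * j) with hP
  have hPcoeff : P.coeff 1 = 1 := by
    rw [hP, Polynomial.finset_sum_coeff]
    rw [Finset.sum_eq_single 0]
    · simp
    · intro j hj hj0
      rw [Polynomial.coeff_X_pow, if_neg]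
      have : 1 < 2 ^ (d * j) := Nat.one_lt_two_pow_iff.mpr (by positivity)
      omega
    · intro h
      exact absurd (Finset.mem_range.mpr (by omega)) h
  have hPne : P ≠ 0 := fun h0 => by simp [h0] at hPcoeff
  have hPdeg : P.natDegree ≤ 2 ^ (m - d) := by
    rw [hP]
    refine Polynomial.natDegree_sum_le_of_forall_le _ _ fun j hj => ?_
    rw [Polynomial.natDegree_X_pow]
    refine Nat.pow_le_pow_right (by norm_num) ?_
    have hj' : j ≤ n - 1 := by
      have := Finset.mem_range.mp hj; omega
    have h3 : d * (n - 1) + d = m := by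
      rw [← Nat.mul_succ]
      rw [← hdn]
      congr 1
      omega
    calc d * j ≤ d * (n - 1) := Nat.mul_le_mul_left _ hj'
      _ ≤ m - d := by omega
  have hEval : ∀ x : Fq m, Polynomial.eval x P = trRel m d x := by
    intro x
    rw [hP, Polynomial.eval_finset_sum]
    unfold trRel
    simp
    rfl
  have hkb : (Finset.univ.filter fun x : Fq m => trRel m d x = 0).card ≤ 2 ^ (m - d) := by
    have h := card_eval_zero_le P hPne
    have heq : (Finset.univ.filter fun x : Fq m => trRel m d x = 0)
        = (Finset.univ.filter fun x => Polynomial.eval x P = 0) := by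
      ext x; simp [hEval x]
    rw [heq]
    exact le_trans h hPdeg
  -- range bound via X^(2^d) - X
  have hrb : Nat.card φ.range ≤ 2 ^ d := by
    set Q : Polynomial (Fq m) := Polynomial.X ^ 2 ^ d - Polynomial.X with hQ
    have hQdeg : Q.natDegree = 2 ^ d := by
      rw [hQ, Polynomial.natDegree_sub_eq_left_of_natDegree_lt, Polynomial.natDegree_X_pow]
      rw [Polynomial.natDegree_X_pow, Polynomial.natDegree_X]
      exact Nat.one_lt_two_pow_iff.mpr (by omega)
    have hQne : Q ≠ 0 := fun h0 => by
      rw [h0, Polynomial.natDegree_zero] at hQdeg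
      have : 1 < 2 ^ d := Nat.one_lt_two_pow_iff.mpr (by omega)
      omega
    have h := card_eval_zero_le Q hQne
    have F : ∀ z : φ.range, Polynomial.eval (z : Fq m) Q = 0 := by
      rintro ⟨x, hx⟩
      obtain ⟨y, hy⟩ := AddMonoidHom.mem_range.mp hx
      have hyx : trRel m d y = x := hy
      simp only [hQ, Polynomial.eval_sub, Polynomial.eval_pow, Polynomial.eval_X]
      rw [← hyx, trRel_pow_q hd hdvd hm y, sub_self]
    have hmap : Nat.card φ.range ≤ Nat.card {x : Fq m // Polynomial.eval x Q = 0} := by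
      refine Nat.card_le_card_of_injective (fun z => ⟨z.1, F z⟩) ?_
      intro z w hzw
      simp only [Subtype.mk.injEq] at hzw
      exact Subtype.ext hzw
    refine le_trans hmap ?_
    rw [Nat.card_eq_fintype_card, Fintype.card_subtype]
    exact hQdeg ▸ h
  -- the product formula
  have hprod : Nat.card (Fq m) = Nat.card (Fq m ⧸ φ.ker) * Nat.card φ.ker :=
    AddSubgroup.card_eq_card_quotient_mul_card_addSubgroup φ.ker
  have hquot : Nat.card (Fq m ⧸ φ.ker) = Nat.card φ.range :=
    Nat.card_congr (QuotientAddGroup.quotientKerEquivRange φ).toEquiv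
  have hcard : Nat.card (Fq m) = 2 ^ m := GaloisField.card 2 m hm
  have hsplit : (2 : ℕ) ^ m = 2 ^ d * 2 ^ (m - d) := by
    rw [← pow_add]
    congr 1
    omega
  set a := Nat.card φ.ker with ha
  set b := Nat.card φ.range with hb
  have hab : 2 ^ d * 2 ^ (m - d) = b * a := by
    rw [← hsplit, ← hcard, hprod, hquot]
  have hble : b ≤ 2 ^ d := hrb
  have hale : a ≤ 2 ^ (m - d) := hker ▸ hkb
  have hge : 2 ^ (m - d) ≤ a := by
    have h1 : 2 ^ d * 2 ^ (m - d) ≤ 2 ^ d * a := by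
      calc 2 ^ d * 2 ^ (m - d) = b * a := hab
        _ ≤ 2 ^ d * a := Nat.mul_le_mul_right a hble
    exact Nat.le_of_mul_le_mul_left h1 (by positivity)
  have : a = 2 ^ (m - d) := le_antisymm hale hge
  rw [← hker, this]

lemma geom_nat (q k : ℕ) (hq : 1 ≤ q) :
    (q - 1) * ∑ j ∈ Finset.range k, q ^ j = q ^ k - 1 := by
  induction k with
  | zero => simp
  | succ k ih =>
    rw [Finset.sum_range_succ, Nat.mul_add, ih, Nat.sub_mul, one_mul]
    have h1 : 1 ≤ q ^ k := Nat.one_le_pow _ _ hq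
    have h2 : q ^ k ≤ q * q ^ k := Nat.le_mul_of_pos_left _ hq
    have h3 : q ^ (k + 1) = q * q ^ k := by rw [pow_succ]; ring
    omega

/-- if `d ∣ m`, `d < m` and `gcd(2^d − 1, m/d) = 1`, then
`#{y ∈ F_{2^m}* : Tr_{2^m/2^d}(y^(2^d−1)) = 0} = 2^(m−d) − 1`. -/
theorem stmt18 (d m : ℕ) (hd : 0 < d) (hdvd : d ∣ m) (hlt : d < m)
    (hg : Nat.gcd (2 ^ d - 1) (m / d) = 1) :
    (Finset.univ.filter (fun y : Fq m =>
        y ≠ 0 ∧ trRel m d (y ^ (2 ^ d - 1)) = 0)).card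
      = 2 ^ (m - d) - 1 := by
  have hm : m ≠ 0 := by omega
  set n := m / d with hn
  have hdn : d * n = m := Nat.mul_div_cancel' hdvd
  have hn2 : 2 ≤ n := by
    by_contra h
    interval_cases n <;> omega
  set q1 := 2 ^ d - 1 with hq1
  have h2d : 1 < 2 ^ d := Nat.one_lt_two_pow_iff.mpr (by omega)
  have h2m : 1 < 2 ^ m := Nat.one_lt_two_pow_iff.mpr (by omega)
  have hq1pos : 0 < q1 := by omega
  set N := 2 ^ m - 1 with hN
  set M := N / q1 with hM
  have hdvdN : q1 ∣ N := by
    have := Nat.sub_dvd_pow_sub_pow (2 ^ d) 1 n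
    simpa [one_pow, ← pow_mul, hdn] using this
  have hMN : q1 * M = N := Nat.mul_div_cancel' hdvdN
  have hNpos : 0 < N := by omega
  have hMpos : 0 < M := by
    rcases Nat.eq_zero_or_pos M with h | h
    · rw [h, Nat.mul_zero] at hMN; omega
    · exact h
  have hMsum : M = ∑ j ∈ Finset.range n, (2 ^ d) ^ j := by
    have hgeo := geom_nat (2 ^ d) n (by omega)
    have hh : q1 * ∑ j ∈ Finset.range n, (2 ^ d) ^ j = N := by
      rw [hq1, hgeo, ← pow_mul, hdn, hN]
    rw [hM, ← hh, Nat.mul_div_cancel_left _ hq1pos]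
  have hcop : Nat.Coprime q1 M := by
    have h2 : ((2 ^ d : ℕ) : ZMod q1) = 1 := by
      have hq : (2:ℕ) ^ d = q1 + 1 := by omega
      rw [hq]
      push_cast
      simp [ZMod.natCast_self]
    have h1 : (M : ZMod q1) = (n : ZMod q1) := by
      rw [hMsum, Nat.cast_sum]
      have hterm : ∀ j, (((2 ^ d) ^ j : ℕ) : ZMod q1) = 1 := by
        intro j
        rw [Nat.cast_pow, h2, one_pow]
      simp only [hterm]
      simp
    have hunit : IsUnit (M : ZMod q1) := by
      rw [h1, ZMod.isUnit_iff_coprime]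
      exact Nat.Coprime.symm hg
    exact ((ZMod.isUnit_iff_coprime M q1).mp hunit).symm
  obtain ⟨e₀, he₁, he₂⟩ := Nat.chineseRemainder hcop 1 q1
  set e := e₀ + q1 * M with he
  have hq1e : q1 ≤ e := by
    have : q1 ≤ q1 * M := Nat.le_mul_of_pos_right _ hMpos
    omega
  have hene : e ≠ 0 := by omega
  have heq1 : e ≡ 1 [MOD q1] := by
    have h0 : q1 * M ≡ 0 [MOD q1] := (Nat.modEq_zero_iff_dvd).mpr ⟨M, rfl⟩
    have h' := he₁.add h0
    rw [add_zero] at h'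
    exact h'
  have heM : e ≡ q1 [MOD M] := by
    have h0 : q1 * M ≡ 0 [MOD M] := (Nat.modEq_zero_iff_dvd).mpr ⟨q1, mul_comm _ _⟩
    have h' := he₂.add h0
    rw [add_zero] at h'
    exact h'
  have hMdvd : M ∣ e - q1 := (Nat.modEq_iff_dvd' hq1e).mp heM.symm
  have hcopeN : Nat.Coprime e N := by
    have h1 : Nat.Coprime e q1 := by
      have hc1 : (e : ZMod q1) = ((1 : ℕ) : ZMod q1) :=
        (ZMod.natCast_eq_natCast_iff _ _ _).mpr heq1
      have : IsUnit (e : ZMod q1) := by rw [hc1]; simp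
      exact (ZMod.isUnit_iff_coprime e q1).mp this
    have h2 : Nat.Coprime e M := by
      have hc2 : (e : ZMod M) = ((q1 : ℕ) : ZMod M) :=
        (ZMod.natCast_eq_natCast_iff _ _ _).mpr heM
      have : IsUnit (e : ZMod M) := by
        rw [hc2]; exact (ZMod.isUnit_iff_coprime q1 M).mpr hcop
      exact (ZMod.isUnit_iff_coprime e M).mp this
    have := Nat.Coprime.mul_right h1 h2
    rwa [hMN] at this
  have hNunits : Nat.card (Fq m)ˣ = N := by
    rw [Nat.card_eq_fintype_card, Fintype.card_units, fqCard m hm]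
  have hinj : Function.Injective (fun y : Fq m => y ^ e) := by
    intro x y hxy
    simp only at hxy
    by_cases hx : x = 0
    · subst hx
      rw [zero_pow hene] at hxy
      exact ((pow_eq_zero_iff hene).mp hxy.symm).symm
    by_cases hy : y = 0
    · subst hy
      rw [zero_pow hene] at hxy
      exact (pow_eq_zero_iff hene).mp hxy
    · have hcop' : (Nat.card (Fq m)ˣ).Coprime e := by rw [hNunits]; exact hcopeN.symm
      have hu : powCoprime hcop' (Units.mk0 x hx) = powCoprime hcop' (Units.mk0 y hy) := by
        apply Units.ext
        simpa [powCoprime, Units.val_pow_eq_pow_val] using hxy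
      have := (powCoprime hcop').injective hu
      have := congrArg Units.val this
      simpa using this
  have hsurj : Function.Surjective (fun y : Fq m => y ^ e) :=
    Finite.surjective_of_injective hinj
  have hyN1 : ∀ y : Fq m, y ≠ 0 → y ^ N = 1 := by
    intro y hy
    have := FiniteField.pow_card_sub_one_eq_one y hy
    rwa [fqCard m hm] at this
  have hkey : ∀ y : Fq m, y ≠ 0 → ∃ c : Fq m, c ≠ 0 ∧ c ^ 2 ^ d = c ∧ y ^ e = c * y ^ q1 := by
    intro y hy
    refine ⟨y ^ (e - q1), pow_ne_zero _ hy, ?_, ?_⟩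
    · have hcq1 : (y ^ (e - q1)) ^ q1 = 1 := by
        rw [← pow_mul]
        obtain ⟨t, ht⟩ := hMdvd
        have hrw : (e - q1) * q1 = N * t := by rw [ht, ← hMN]; ring
        rw [hrw, pow_mul, hyN1 y hy, one_pow]
      have h2dq : 2 ^ d = q1 + 1 := by omega
      rw [h2dq, pow_succ, hcq1, one_mul]
    · rw [← pow_add]
      congr 1
      omega
  set T := Finset.univ.filter (fun y : Fq m => y ≠ 0 ∧ trRel m d y = 0) with hT
  have hTcard : T.card = 2 ^ (m - d) - 1 := by
    have hK := trRel_ker_card d m hd hdvd hlt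
    set K := Finset.univ.filter (fun x : Fq m => trRel m d x = 0) with hKdef
    have h0K : (0 : Fq m) ∈ K := by simp [hKdef, trRel_zero]
    have hTK : T = K.erase 0 := by
      ext y
      simp [hT, hKdef, Finset.mem_erase, and_comm]
    rw [hTK, Finset.card_erase_of_mem h0K, hK]
  rw [← hTcard]
  refine Finset.card_bij (fun y _ => y ^ e) ?_ ?_ ?_
  · intro y hy
    rw [Finset.mem_filter] at hy
    obtain ⟨-, hy0, hytr⟩ := hy
    obtain ⟨c, hc0, hcq, hce⟩ := hkey y hy0
    rw [hT, Finset.mem_filter]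
    refine ⟨Finset.mem_univ _, pow_ne_zero _ hy0, ?_⟩
    show trRel m d (y ^ e) = 0
    rw [hce, trRel_mul_left hcq, hytr, mul_zero]
  · intro y₁ h₁ y₂ h₂ h
    exact hinj h
  · intro t ht
    rw [hT, Finset.mem_filter] at ht
    obtain ⟨-, ht0, httr⟩ := ht
    obtain ⟨y, hy⟩ := hsurj t
    simp only at hy
    have hy0 : y ≠ 0 := by
      rintro rfl
      rw [zero_pow hene] at hy
      exact ht0 hy.symm
    obtain ⟨c, hc0, hcq, hce⟩ := hkey y hy0
    refine ⟨y, Finset.mem_filter.mpr ⟨Finset.mem_univ _, hy0, ?_⟩, hy⟩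
    have hmul : c * trRel m d (y ^ q1) = 0 := by
      rw [← trRel_mul_left hcq, ← hce, hy, httr]
    exact (mul_eq_zero.mp hmul).resolve_left hc0
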